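/- Let P be a penny configuration in general position, and let A, B ∈ P with dist(A,B) = 1 such that both A and B have degree 5. Then A and B have a common unit-neighbor, i.e., there exists C ∈ P with dist(C,A) = 1 and dist(C,B) = 1. -/

import Mathlib

open Real EuclideanGeometry

/-- The Euclidean plane. -/
abbrev Pt := EuclideanSpace ℝ (Fin 2)

/-- A penny configuration in general position: a finite set of points in the plane
such that any two distinct points are at distance at least 1 and no three points
are collinear. -/
def PennyGP (P : Finset Pt) : Prop :=
  (∀ p ∈ P, ∀ q ∈ P, p ≠ q → 1 ≤ dist p q) ∧
  (∀ p ∈ P, ∀ q ∈ P, ∀ r ∈ P, p ≠ q → p ≠ r → q ≠ r →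
    ¬ Collinear ℝ ({p, q, r} : Set Pt))

/-- The degree of a point `A` in the penny graph of `P`: the number of points of `P`
at distance exactly 1 from `A`. -/
noncomputable def deg (P : Finset Pt) (A : Pt) : ℕ :=
  {q : Pt | q ∈ P ∧ dist A q = 1}.ncard

/-! ### Auxiliary real-analysis lemmas -/

lemma unit_facts {x y : ℝ} (h : x^2 + y^2 = 1) (hy : 0 < y) :
    0 < arccos x ∧ arccos x < π ∧ cos (arccos x) = x ∧ sin (arccos x) = y := by
  have hx1 : x < 1 := by nlinarith
  have hx2 : -1 < x := by nlinarith
  refine ⟨Real.arccos_pos.2 hx1,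
    lt_of_le_of_ne (Real.arccos_le_pi x) (fun hc => by
      have := Real.arccos_eq_pi.1 hc; linarith),
    Real.cos_arccos hx2.le hx1.le, ?_⟩
  rw [Real.sin_arccos, show 1 - x^2 = y^2 by linarith]
  exact Real.sqrt_sq hy.le

lemma L0 {x y : ℝ} (h : x^2 + y^2 = 1) (hy : 0 < y) (hx : x < 1/2) :
    π/3 < arccos x := by
  by_contra hle
  push_neg at hle
  have h2 := Real.cos_le_cos_of_nonneg_of_le_pi (Real.arccos_nonneg x)
    (by linarith [Real.pi_pos]) hle
  rw [Real.cos_pi_div_three, (unit_facts h hy).2.2.1] at h2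
  linarith

lemma L1 {x y x' y' : ℝ} (h : x^2 + y^2 = 1) (h' : x'^2 + y'^2 = 1)
    (hy : 0 < y) (hy' : 0 < y') (hip : x*x' + y*y' ≤ 1/2) :
    π/3 ≤ |arccos x - arccos x'| := by
  obtain ⟨-, -, hc, hs⟩ := unit_facts h hy
  obtain ⟨-, -, hc', hs'⟩ := unit_facts h' hy'
  have hsub : cos (arccos x - arccos x') = x*x' + y*y' := by
    rw [Real.cos_sub, hc, hc', hs, hs']
  by_contra hlt
  push_neg at hlt
  have h2 := Real.cos_lt_cos_of_nonneg_of_le_pi (abs_nonneg _)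
    (by linarith [Real.pi_pos]) hlt
  rw [Real.cos_pi_div_three, Real.cos_abs, hsub] at h2
  linarith

lemma L2 {x y x' y' : ℝ} (h : x^2 + y^2 = 1) (h' : x'^2 + y'^2 = 1)
    (hy : 0 < y) (hy' : 0 < y')
    (hd : 1 ≤ (x + x' - 1)^2 + (y - y')^2) : π ≤ arccos x + arccos x' := by
  obtain ⟨ha0, hapi, hc, hs⟩ := unit_facts h hy
  obtain ⟨ha0', hapi', hc', hs'⟩ := unit_facts h' hy'
  set α := arccos x
  set α' := arccos x'
  have key : x + x' - (x*x' - y*y') ≤ 1 := by nlinarith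
  have hcadd : cos (α + α') = x*x' - y*y' := by rw [Real.cos_add, hc, hc', hs, hs']
  by_contra hlt
  push_neg at hlt
  set s := (α + α')/2 with hs_def
  set d := (α - α')/2 with hd_def
  have hcos2 : cos α + cos α' = 2 * cos s * cos d := Real.cos_add_cos α α'
  have hcadd2 : cos (α + α') = 2 * cos s ^ 2 - 1 := by
    rw [show α + α' = 2 * s by rw [hs_def]; ring, Real.cos_two_mul]
  have hcs : 0 < cos s := by
    apply Real.cos_pos_of_mem_Ioo
    constructor
    · rw [hs_def]; linarith [Real.pi_pos]
    · rw [hs_def]; linarith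
  have hds : cos s < cos d := by
    have h1 : |d| < s := by
      rw [abs_lt]
      constructor
      · rw [hd_def, hs_def]; linarith
      · rw [hd_def, hs_def]; linarith
    have := Real.cos_lt_cos_of_nonneg_of_le_pi (abs_nonneg d) (by linarith [Real.pi_pos]) h1
    rwa [Real.cos_abs] at this
  have : 1 < cos α + cos α' - cos (α + α') := by
    rw [hcos2, hcadd2]; nlinarith
  rw [hc, hc', hcadd] at this
  linarith

lemma L3 {x y x' y' : ℝ} (h : x^2 + y^2 = 1) (h' : x'^2 + y'^2 = 1)
    (hy : 0 < y) (hy' : 0 < y')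
    (hd : 1 ≤ (x - x')^2 + (y + y')^2) : arccos x + arccos x' ≤ 5*π/3 := by
  obtain ⟨ha0, hapi, hc, hs⟩ := unit_facts h hy
  obtain ⟨ha0', hapi', hc', hs'⟩ := unit_facts h' hy'
  set α := arccos x
  set α' := arccos x'
  have key : x*x' - y*y' ≤ 1/2 := by nlinarith
  have hcadd : cos (α + α') = x*x' - y*y' := by rw [Real.cos_add, hc, hc', hs, hs']
  by_contra hlt
  push_neg at hlt
  have ht : cos (α + α') = cos (2*π - (α + α')) := by
    rw [Real.cos_sub, Real.cos_two_pi, Real.sin_two_pi]; ring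
  have h2 := Real.cos_lt_cos_of_nonneg_of_le_pi (by linarith : (0:ℝ) ≤ 2*π - (α + α'))
    (by linarith [Real.pi_pos]) (by linarith : 2*π - (α + α') < π/3)
  rw [Real.cos_pi_div_three, ← ht, hcadd] at h2
  linarith

/-! ### Coordinates adapted to the segment `AB` -/

lemma dist_sq' (p q : Pt) : dist p q ^ 2 = (p 0 - q 0)^2 + (p 1 - q 1)^2 := by
  rw [EuclideanSpace.dist_eq, Real.sq_sqrt (by positivity)]
  simp [Fin.sum_univ_two, Real.dist_eq, sq_abs]

noncomputable def Xc (A B p : Pt) : ℝ :=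
  (p 0 - A 0) * (B 0 - A 0) + (p 1 - A 1) * (B 1 - A 1)
noncomputable def Yc (A B p : Pt) : ℝ :=
  -((p 0 - A 0) * (B 1 - A 1)) + (p 1 - A 1) * (B 0 - A 0)

lemma unit_v {A B : Pt} (hAB : dist A B = 1) :
    (B 0 - A 0)^2 + (B 1 - A 1)^2 = 1 := by
  have h := dist_sq' A B
  rw [hAB] at h
  nlinarith [h]

lemma coord_dist {A B : Pt} (hAB : dist A B = 1) (p q : Pt) :
    dist p q ^ 2 = (Xc A B p - Xc A B q)^2 + (Yc A B p - Yc A B q)^2 := by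
  have hv := unit_v hAB
  rw [dist_sq']
  unfold Xc Yc
  linear_combination (-((p 0 - q 0)^2 + (p 1 - q 1)^2)) * hv

lemma Xc_A (A B : Pt) : Xc A B A = 0 := by unfold Xc; ring
lemma Yc_A (A B : Pt) : Yc A B A = 0 := by unfold Yc; ring
lemma Yc_B (A B : Pt) : Yc A B B = 0 := by unfold Yc; ring
lemma Xc_B {A B : Pt} (hAB : dist A B = 1) : Xc A B B = 1 := by
  have hv := unit_v hAB; unfold Xc; linear_combination hv

lemma coord_inj {A B : Pt} (hAB : dist A B = 1) {p q : Pt}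
    (hx : Xc A B p = Xc A B q) (hy : Yc A B p = Yc A B q) : p = q := by
  have hv := unit_v hAB
  unfold Xc at hx; unfold Yc at hy
  ext i; fin_cases i
  · show p 0 = q 0
    linear_combination (B 0 - A 0) * hx - (B 1 - A 1) * hy - (p 0 - q 0) * hv
  · show p 1 = q 1
    linear_combination (B 1 - A 1) * hx + (B 0 - A 0) * hy - (p 1 - q 1) * hv

lemma y_zero_collinear {A B : Pt} (hAB : dist A B = 1) {p : Pt}
    (hy : Yc A B p = 0) : Collinear ℝ ({A, B, p} : Set Pt) := by
  have hv := unit_v hAB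
  rw [collinear_iff_of_mem (show A ∈ ({A,B,p}:Set Pt) by simp)]
  refine ⟨B - A, fun q hq => ?_⟩
  simp only [Set.mem_insert_iff, Set.mem_singleton_iff] at hq
  rcases hq with rfl | rfl | rfl
  · exact ⟨0, by simp⟩
  · exact ⟨1, by rw [vadd_eq_add]; module⟩
  · refine ⟨Xc A B q, ?_⟩
    rw [vadd_eq_add]
    unfold Yc at hy
    ext i; fin_cases i
    · show q 0 = Xc A B q * (B - A) 0 + A 0
      simp only [PiLp.sub_apply]
      unfold Xc
      linear_combination (-(q 0 - A 0)) * hv - (B 1 - A 1) * hy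
    · show q 1 = Xc A B q * (B - A) 1 + A 1
      simp only [PiLp.sub_apply]
      unfold Xc
      linear_combination (-(q 1 - A 1)) * hv + (B 0 - A 0) * hy

lemma coord_neg_X (A B C : Pt) : Xc A B ((2:ℝ) • A - C) = - Xc A B C := by
  unfold Xc
  simp only [PiLp.sub_apply, PiLp.smul_apply, smul_eq_mul]
  ring

lemma coord_neg_Y (A B C : Pt) : Yc A B ((2:ℝ) • A - C) = - Yc A B C := by
  unfold Yc
  simp only [PiLp.sub_apply, PiLp.smul_apply, smul_eq_mul]
  ring

lemma mid_collinear (A C C' : Pt) (h : C' = (2:ℝ) • A - C) :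
    Collinear ℝ ({A, C, C'} : Set Pt) := by
  rw [collinear_iff_of_mem (show A ∈ ({A,C,C'}:Set Pt) by simp)]
  refine ⟨C - A, fun q hq => ?_⟩
  simp only [Set.mem_insert_iff, Set.mem_singleton_iff] at hq
  rcases hq with rfl | rfl | rfl
  · exact ⟨0, by simp⟩
  · exact ⟨1, by rw [vadd_eq_add]; module⟩
  · exact ⟨-1, by rw [vadd_eq_add, h]; module⟩

/-! ### Combinatorial lemmas -/

lemma side_card {α : Type*} (s : Finset α) (g : α → ℝ)
    (hlb : ∀ c ∈ s, π/3 < g c) (hub : ∀ c ∈ s, g c < π)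
    (hsep : ∀ c ∈ s, ∀ d ∈ s, c ≠ d → π/3 ≤ |g c - g d|) :
    s.card ≤ 2 := by
  by_contra hgt
  push_neg at hgt
  obtain ⟨a, ha, b, hb, c, hc, hab, hac, hbc⟩ := Finset.two_lt_card.1 hgt
  have h1 := hsep a ha b hb hab
  have h2 := hsep a ha c hc hac
  have h3 := hsep b hb c hc hbc
  rcases le_abs.1 h1 with h1 | h1 <;> rcases le_abs.1 h2 with h2 | h2 <;>
    rcases le_abs.1 h3 with h3 | h3 <;>
    linarith [hlb a ha, hub a ha, hlb b hb, hub b hb, hlb c hc, hub c hc]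

lemma side_pair {α : Type*} [DecidableEq α] (s : Finset α) (g : α → ℝ)
    (hcard : s.card = 2)
    (hsep : ∀ c ∈ s, ∀ d ∈ s, c ≠ d → π/3 ≤ |g c - g d|) :
    ∃ c ∈ s, ∃ d ∈ s, g c + π/3 ≤ g d := by
  obtain ⟨a, b, hab, rfl⟩ := Finset.card_eq_two.1 hcard
  have ha : a ∈ ({a, b} : Finset α) := by simp
  have hb : b ∈ ({a, b} : Finset α) := by simp
  have h := hsep a ha b hb hab
  rcases le_abs.1 h with h1 | h1
  · exact ⟨b, hb, a, ha, by linarith⟩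
  · exact ⟨a, ha, b, hb, by linarith⟩

set_option maxHeartbeats 1000000 in
/-- In a penny configuration in general position, two adjacent points of degree 5
have a common unit-neighbor. -/
theorem adjacent_degree_five_common_neighbor (P : Finset Pt) (hP : PennyGP P)
    (A B : Pt) (hA : A ∈ P) (hB : B ∈ P) (hAB : dist A B = 1)
    (hdA : deg P A = 5) (hdB : deg P B = 5) :
    ∃ C ∈ P, dist C A = 1 ∧ dist C B = 1 := by
  classical
  by_contra hno
  push_neg at hno
  have hv := unit_v hAB
  have hBA : dist B A = 1 := by rw [dist_comm]; exact hAB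
  have hABne : A ≠ B := fun h => by rw [h, dist_self] at hAB; norm_num at hAB
  set NA := P.filter (fun q => dist A q = 1) with hNA_def
  set NB := P.filter (fun q => dist B q = 1) with hNB_def
  have hNAcard : NA.card = 5 := by
    have hset : {q : Pt | q ∈ P ∧ dist A q = 1} = ↑NA := by
      ext q; simp [hNA_def, Finset.mem_filter]
    rw [deg, hset, Set.ncard_coe_finset] at hdA; exact hdA
  have hNBcard : NB.card = 5 := by
    have hset : {q : Pt | q ∈ P ∧ dist B q = 1} = ↑NB := by
      ext q; simp [hNB_def, Finset.mem_filter]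
    rw [deg, hset, Set.ncard_coe_finset] at hdB; exact hdB
  have hBNA : B ∈ NA := Finset.mem_filter.2 ⟨hB, hAB⟩
  have hANB : A ∈ NB := Finset.mem_filter.2 ⟨hA, hBA⟩
  set NA' := NA.erase B with hNA'_def
  set NB' := NB.erase A with hNB'_def
  have hNA'card : NA'.card = 4 := by
    rw [hNA'_def, Finset.card_erase_of_mem hBNA, hNAcard]
  have hNB'card : NB'.card = 4 := by
    rw [hNB'_def, Finset.card_erase_of_mem hANB, hNBcard]
  -- basic facts about near-neighbors of A
  have hAfacts : ∀ C ∈ NA', C ∈ P ∧ dist A C = 1 ∧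
      (Xc A B C)^2 + (Yc A B C)^2 = 1 ∧ Xc A B C < 1/2 ∧ Yc A B C ≠ 0 := by
    intro C hC
    have hCB : C ≠ B := Finset.ne_of_mem_erase hC
    have hCNA : C ∈ NA := Finset.mem_of_mem_erase hC
    have hCP : C ∈ P := (Finset.mem_filter.1 hCNA).1
    have hCA : dist A C = 1 := (Finset.mem_filter.1 hCNA).2
    have hCne_A : C ≠ A := fun h => by rw [h, dist_self] at hCA; norm_num at hCA
    have hunit : (Xc A B C)^2 + (Yc A B C)^2 = 1 := by
      have h := coord_dist hAB C A
      rw [dist_comm C A, hCA, Xc_A, Yc_A] at h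
      nlinarith [h]
    have hgt : 1 < dist C B := by
      have h1 : 1 ≤ dist C B := hP.1 C hCP B hB hCB
      have h2 : dist C B ≠ 1 := hno C hCP (by rw [dist_comm]; exact hCA)
      exact lt_of_le_of_ne h1 (Ne.symm h2)
    have hX : Xc A B C < 1/2 := by
      have h := coord_dist hAB C B
      rw [Xc_B hAB, Yc_B] at h
      nlinarith [hgt, dist_nonneg (x := C) (y := B), hunit]
    have hY : Yc A B C ≠ 0 := fun h0 =>
      hP.2 A hA B hB C hCP hABne (Ne.symm hCne_A) (Ne.symm hCB)
        (y_zero_collinear hAB h0)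
    exact ⟨hCP, hCA, hunit, hX, hY⟩
  -- basic facts about near-neighbors of B
  have hBfacts : ∀ D ∈ NB', D ∈ P ∧ dist B D = 1 ∧
      (1 - Xc A B D)^2 + (Yc A B D)^2 = 1 ∧ 1 - Xc A B D < 1/2 ∧ Yc A B D ≠ 0 := by
    intro D hD
    have hDA : D ≠ A := Finset.ne_of_mem_erase hD
    have hDNB : D ∈ NB := Finset.mem_of_mem_erase hD
    have hDP : D ∈ P := (Finset.mem_filter.1 hDNB).1
    have hDB : dist B D = 1 := (Finset.mem_filter.1 hDNB).2
    have hDne_B : D ≠ B := fun h => by rw [h, dist_self] at hDB; norm_num at hDB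
    have hunit : (1 - Xc A B D)^2 + (Yc A B D)^2 = 1 := by
      have h := coord_dist hAB D B
      rw [dist_comm D B, hDB, Xc_B hAB, Yc_B] at h
      nlinarith [h]
    have hgt : 1 < dist D A := by
      have h1 : 1 ≤ dist D A := hP.1 D hDP A hA hDA
      have h2 : dist D A ≠ 1 := fun h => hno D hDP h (by rw [dist_comm]; exact hDB)
      exact lt_of_le_of_ne h1 (Ne.symm h2)
    have hX : 1 - Xc A B D < 1/2 := by
      have h := coord_dist hAB D A
      rw [Xc_A, Yc_A] at h
      nlinarith [hgt, dist_nonneg (x := D) (y := A), hunit]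
    have hY : Yc A B D ≠ 0 := fun h0 =>
      hP.2 A hA B hB D hDP hABne (Ne.symm hDA) (Ne.symm hDne_B)
        (y_zero_collinear hAB h0)
    exact ⟨hDP, hDB, hunit, hX, hY⟩
  -- distance at least one between distinct relevant points
  have hdist2 : ∀ p ∈ P, ∀ q ∈ P, p ≠ q →
      1 ≤ (Xc A B p - Xc A B q)^2 + (Yc A B p - Yc A B q)^2 := by
    intro p hp q hq hpq
    have h1 : 1 ≤ dist p q := hP.1 p hp q hq hpq
    have h2 : 1 ≤ dist p q ^ 2 := by nlinarith
    rwa [coord_dist hAB] at h2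
  -- members of NA' are never equal to members of NB'
  have hAne : ∀ C ∈ NA', ∀ D ∈ NB', C ≠ D := by
    intro C hC D hD h
    obtain ⟨hCP, hCA, -, -, -⟩ := hAfacts C hC
    obtain ⟨-, hDB, -, -, -⟩ := hBfacts D hD
    subst h
    exact hno C hCP (by rw [dist_comm]; exact hCA) (by rw [dist_comm]; exact hDB)
  -- the four sides
  set UpA := NA'.filter (fun C => 0 < Yc A B C) with hUpA_def
  set LoA := NA'.filter (fun C => Yc A B C < 0) with hLoA_def
  set UpB := NB'.filter (fun D => 0 < Yc A B D) with hUpB_def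
  set LoB := NB'.filter (fun D => Yc A B D < 0) with hLoB_def
  have hsplitA : UpA.card + LoA.card = 4 := by
    have h := Finset.card_filter_add_card_filter_not
      (s := NA') (p := fun C => 0 < Yc A B C)
    have he : NA'.filter (fun C => ¬ 0 < Yc A B C) = LoA := by
      apply Finset.filter_congr
      intro C hC
      have hY := (hAfacts C hC).2.2.2.2
      constructor
      · intro h'; exact (not_lt.1 h').lt_of_ne hY
      · intro h'; exact not_lt.2 h'.le
    rw [he] at h
    rw [h, hNA'card]
  have hsplitB : UpB.card + LoB.card = 4 := by
    have h := Finset.card_filter_add_card_filter_not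
      (s := NB') (p := fun D => 0 < Yc A B D)
    have he : NB'.filter (fun D => ¬ 0 < Yc A B D) = LoB := by
      apply Finset.filter_congr
      intro D hD
      have hY := (hBfacts D hD).2.2.2.2
      constructor
      · intro h'; exact (not_lt.1 h').lt_of_ne hY
      · intro h'; exact not_lt.2 h'.le
    rw [he] at h
    rw [h, hNB'card]
  -- separation on each side
  have hsepUpA : ∀ c ∈ UpA, ∀ d ∈ UpA, c ≠ d → π/3 ≤ |arccos (Xc A B c) - arccos (Xc A B d)| := by
    intro c hc d hd hcd
    obtain ⟨hcNA, hcY⟩ := Finset.mem_filter.1 hc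
    obtain ⟨hdNA, hdY⟩ := Finset.mem_filter.1 hd
    obtain ⟨hcP, -, hcU, -, -⟩ := hAfacts c hcNA
    obtain ⟨hdP, -, hdU, -, -⟩ := hAfacts d hdNA
    exact L1 hcU hdU hcY hdY (by nlinarith [hdist2 c hcP d hdP hcd])
  have hsepLoA : ∀ c ∈ LoA, ∀ d ∈ LoA, c ≠ d → π/3 ≤ |arccos (Xc A B c) - arccos (Xc A B d)| := by
    intro c hc d hd hcd
    obtain ⟨hcNA, hcY⟩ := Finset.mem_filter.1 hc
    obtain ⟨hdNA, hdY⟩ := Finset.mem_filter.1 hd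
    obtain ⟨hcP, -, hcU, -, -⟩ := hAfacts c hcNA
    obtain ⟨hdP, -, hdU, -, -⟩ := hAfacts d hdNA
    exact L1 (x := Xc A B c) (y := -Yc A B c) (x' := Xc A B d) (y' := -Yc A B d) (by rw [neg_pow]; simpa using hcU)
      (by rw [neg_pow]; simpa using hdU) (by linarith) (by linarith)
      (by nlinarith [hdist2 c hcP d hdP hcd])
  have hsepUpB : ∀ c ∈ UpB, ∀ d ∈ UpB, c ≠ d → π/3 ≤ |arccos (1 - Xc A B c) - arccos (1 - Xc A B d)| := by
    intro c hc d hd hcd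
    obtain ⟨hcNB, hcY⟩ := Finset.mem_filter.1 hc
    obtain ⟨hdNB, hdY⟩ := Finset.mem_filter.1 hd
    obtain ⟨hcP, -, hcU, -, -⟩ := hBfacts c hcNB
    obtain ⟨hdP, -, hdU, -, -⟩ := hBfacts d hdNB
    exact L1 hcU hdU hcY hdY (by nlinarith [hdist2 c hcP d hdP hcd])
  have hsepLoB : ∀ c ∈ LoB, ∀ d ∈ LoB, c ≠ d → π/3 ≤ |arccos (1 - Xc A B c) - arccos (1 - Xc A B d)| := by
    intro c hc d hd hcd
    obtain ⟨hcNB, hcY⟩ := Finset.mem_filter.1 hc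
    obtain ⟨hdNB, hdY⟩ := Finset.mem_filter.1 hd
    obtain ⟨hcP, -, hcU, -, -⟩ := hBfacts c hcNB
    obtain ⟨hdP, -, hdU, -, -⟩ := hBfacts d hdNB
    exact L1 (x := 1 - Xc A B c) (y := -Yc A B c) (x' := 1 - Xc A B d) (y' := -Yc A B d) (by rw [neg_pow]; simpa using hcU)
      (by rw [neg_pow]; simpa using hdU) (by linarith) (by linarith)
      (by nlinarith [hdist2 c hcP d hdP hcd])
  -- each side has at most two points
  have hcardUpA : UpA.card ≤ 2 := by
    apply side_card UpA (fun C => arccos (Xc A B C)) _ _ hsepUpA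
    · intro c hc
      obtain ⟨hcNA, hcY⟩ := Finset.mem_filter.1 hc
      obtain ⟨-, -, hcU, hcX, -⟩ := hAfacts c hcNA
      exact L0 hcU hcY hcX
    · intro c hc
      obtain ⟨hcNA, hcY⟩ := Finset.mem_filter.1 hc
      obtain ⟨-, -, hcU, -, -⟩ := hAfacts c hcNA
      exact (unit_facts hcU hcY).2.1
  have hcardLoA : LoA.card ≤ 2 := by
    apply side_card LoA (fun C => arccos (Xc A B C)) _ _ hsepLoA
    · intro c hc
      obtain ⟨hcNA, hcY⟩ := Finset.mem_filter.1 hc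
      obtain ⟨-, -, hcU, hcX, -⟩ := hAfacts c hcNA
      exact L0 (x := Xc A B c) (y := -Yc A B c) (by rw [neg_pow]; simpa using hcU) (by linarith) hcX
    · intro c hc
      obtain ⟨hcNA, hcY⟩ := Finset.mem_filter.1 hc
      obtain ⟨-, -, hcU, -, -⟩ := hAfacts c hcNA
      exact (unit_facts (x := Xc A B c) (y := -Yc A B c) (by rw [neg_pow]; simpa using hcU)
        (by linarith)).2.1
  have hcardUpB : UpB.card ≤ 2 := by
    apply side_card UpB (fun D => arccos (1 - Xc A B D)) _ _ hsepUpB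
    · intro c hc
      obtain ⟨hcNB, hcY⟩ := Finset.mem_filter.1 hc
      obtain ⟨-, -, hcU, hcX, -⟩ := hBfacts c hcNB
      exact L0 hcU hcY hcX
    · intro c hc
      obtain ⟨hcNB, hcY⟩ := Finset.mem_filter.1 hc
      obtain ⟨-, -, hcU, -, -⟩ := hBfacts c hcNB
      exact (unit_facts hcU hcY).2.1
  have hcardLoB : LoB.card ≤ 2 := by
    apply side_card LoB (fun D => arccos (1 - Xc A B D)) _ _ hsepLoB
    · intro c hc
      obtain ⟨hcNB, hcY⟩ := Finset.mem_filter.1 hc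
      obtain ⟨-, -, hcU, hcX, -⟩ := hBfacts c hcNB
      exact L0 (x := 1 - Xc A B c) (y := -Yc A B c) (by rw [neg_pow]; simpa using hcU) (by linarith) hcX
    · intro c hc
      obtain ⟨hcNB, hcY⟩ := Finset.mem_filter.1 hc
      obtain ⟨-, -, hcU, -, -⟩ := hBfacts c hcNB
      exact (unit_facts (x := 1 - Xc A B c) (y := -Yc A B c) (by rw [neg_pow]; simpa using hcU)
        (by linarith)).2.1
  -- hence exactly two on each side
  have hUpA2 : UpA.card = 2 := by omega
  have hLoA2 : LoA.card = 2 := by omega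
  have hUpB2 : UpB.card = 2 := by omega
  have hLoB2 : LoB.card = 2 := by omega
  -- extract ordered pairs
  obtain ⟨C1, hC1, C2, hC2, hC12⟩ := side_pair UpA (fun C => arccos (Xc A B C)) hUpA2 hsepUpA
  obtain ⟨C1', hC1', C2', hC2', hC12'⟩ := side_pair LoA (fun C => arccos (Xc A B C)) hLoA2 hsepLoA
  obtain ⟨D1, hD1, D2, hD2, hD12⟩ := side_pair UpB (fun D => arccos (1 - Xc A B D)) hUpB2 hsepUpB
  obtain ⟨D1', hD1', D2', hD2', hD12'⟩ := side_pair LoB (fun D => arccos (1 - Xc A B D)) hLoB2 hsepLoB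
  -- unpack memberships
  obtain ⟨hC1NA, hC1Y⟩ := Finset.mem_filter.1 hC1
  obtain ⟨hC2NA, hC2Y⟩ := Finset.mem_filter.1 hC2
  obtain ⟨hC1'NA, hC1'Y⟩ := Finset.mem_filter.1 hC1'
  obtain ⟨hC2'NA, hC2'Y⟩ := Finset.mem_filter.1 hC2'
  obtain ⟨hD1NB, hD1Y⟩ := Finset.mem_filter.1 hD1
  obtain ⟨hD2NB, hD2Y⟩ := Finset.mem_filter.1 hD2
  obtain ⟨hD1'NB, hD1'Y⟩ := Finset.mem_filter.1 hD1'
  obtain ⟨hD2'NB, hD2'Y⟩ := Finset.mem_filter.1 hD2'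
  obtain ⟨hC1P, hC1A, hC1U, hC1X, -⟩ := hAfacts C1 hC1NA
  obtain ⟨hC2P, -, hC2U, -, -⟩ := hAfacts C2 hC2NA
  obtain ⟨hC1'P, hC1'A, hC1'U, -, -⟩ := hAfacts C1' hC1'NA
  obtain ⟨hC2'P, -, hC2'U, -, -⟩ := hAfacts C2' hC2'NA
  obtain ⟨hD1P, -, hD1U, -, -⟩ := hBfacts D1 hD1NB
  obtain ⟨hD2P, -, hD2U, -, -⟩ := hBfacts D2 hD2NB
  obtain ⟨hD1'P, -, hD1'U, -, -⟩ := hBfacts D1' hD1'NB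
  obtain ⟨hD2'P, -, hD2'U, -, -⟩ := hBfacts D2' hD2'NB
  -- cross constraints (L2)
  have hcross : π ≤ arccos (Xc A B C1) + arccos (1 - Xc A B D1) := by
    apply L2 hC1U hD1U hC1Y hD1Y
    have h := hdist2 C1 hC1P D1 hD1P (hAne C1 hC1NA D1 hD1NB)
    calc (1:ℝ) ≤ (Xc A B C1 - Xc A B D1)^2 + (Yc A B C1 - Yc A B D1)^2 := h
    _ = (Xc A B C1 + (1 - Xc A B D1) - 1)^2 + (Yc A B C1 - Yc A B D1)^2 := by ring
  have hcross' : π ≤ arccos (Xc A B C1') + arccos (1 - Xc A B D1') := by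
    apply L2 (x := Xc A B C1') (y := -Yc A B C1') (x' := 1 - Xc A B D1') (y' := -Yc A B D1')
      (by rw [neg_pow]; simpa using hC1'U) (by rw [neg_pow]; simpa using hD1'U)
      (by linarith) (by linarith)
    have h := hdist2 C1' hC1'P D1' hD1'P (hAne C1' hC1'NA D1' hD1'NB)
    calc (1:ℝ) ≤ (Xc A B C1' - Xc A B D1')^2 + (Yc A B C1' - Yc A B D1')^2 := h
    _ = (Xc A B C1' + (1 - Xc A B D1') - 1)^2 + (-Yc A B C1' - -Yc A B D1')^2 := by ring
  -- top constraints (L3)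
  have hCtop : arccos (Xc A B C2) + arccos (Xc A B C2') ≤ 5*π/3 := by
    apply L3 hC2U (x' := Xc A B C2') (y' := -Yc A B C2') (by rw [neg_pow]; simpa using hC2'U)
      hC2Y (by linarith)
    have hne : C2 ≠ C2' := fun h => by rw [h] at hC2Y; linarith
    have h := hdist2 C2 hC2P C2' hC2'P hne
    calc (1:ℝ) ≤ (Xc A B C2 - Xc A B C2')^2 + (Yc A B C2 - Yc A B C2')^2 := h
    _ = (Xc A B C2 - Xc A B C2')^2 + (Yc A B C2 + -Yc A B C2')^2 := by ring
  have hDtop : arccos (1 - Xc A B D2) + arccos (1 - Xc A B D2') ≤ 5*π/3 := by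
    apply L3 hD2U (x' := 1 - Xc A B D2') (y' := -Yc A B D2') (by rw [neg_pow]; simpa using hD2'U)
      hD2Y (by linarith)
    have hne : D2 ≠ D2' := fun h => by rw [h] at hD2Y; linarith
    have h := hdist2 D2 hD2P D2' hD2'P hne
    calc (1:ℝ) ≤ (Xc A B D2 - Xc A B D2')^2 + (Yc A B D2 - Yc A B D2')^2 := h
    _ = ((1 - Xc A B D2) - (1 - Xc A B D2'))^2 + (Yc A B D2 + -Yc A B D2')^2 := by ring
  -- the final equality
  have hsum : arccos (Xc A B C1) + arccos (Xc A B C1') = π := by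
    apply le_antisymm
    · linarith
    · linarith
  -- derive coordinates of C1' from those of C1
  obtain ⟨-, -, hc1cos, hc1sin⟩ := unit_facts hC1U hC1Y
  obtain ⟨-, -, hc1'cos, hc1'sin⟩ := unit_facts (x := Xc A B C1') (y := -Yc A B C1')
    (by rw [neg_pow]; simpa using hC1'U) (by linarith)
  have hgA1' : arccos (Xc A B C1') = π - arccos (Xc A B C1) := by linarith
  have hXeq : Xc A B C1' = - Xc A B C1 := by
    rw [← hc1cos, ← hc1'cos, hgA1', Real.cos_pi_sub]
  have hYeq : Yc A B C1' = - Yc A B C1 := by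
    have : -Yc A B C1' = Yc A B C1 := by
      rw [← hc1sin, ← hc1'sin, hgA1', Real.sin_pi_sub]
    linarith
  -- C1' is the reflection of C1 through A, contradicting general position
  have hC1'eq : C1' = (2:ℝ) • A - C1 := by
    apply coord_inj hAB
    · rw [coord_neg_X]; exact hXeq
    · rw [coord_neg_Y]; exact hYeq
  have hAC1 : A ≠ C1 := fun h => by rw [← h, dist_self] at hC1A; norm_num at hC1A
  have hAC1' : A ≠ C1' := fun h => by rw [← h, dist_self] at hC1'A; norm_num at hC1'A
  have hC1C1' : C1 ≠ C1' := fun h => by rw [h] at hC1Y; linarith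
  exact hP.2 A hA C1 hC1P C1' hC1'P hAC1 hAC1' hC1C1'
    (mid_collinear A C1 C1' hC1'eq)
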